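/- arXiv:2007.08611 — 2 statements merged into one kernel-verified Lean document; each statement's English description precedes it below -/
import Mathlib

section
/- The function d((x,t),(y,s)) := min{ |x'-y'| + |x_n - y_n| + |t-s|^{1/2}, |x'-y'| + |x_n| + |y_n| + |t-s| } defined on ℝ^{n+1} (with x = (x', x_n) ∈ ℝ^{n-1} × ℝ and t ∈ ℝ) satisfies the triangle inequality: d((x,t),(z,r)) ≤ d((x,t),(y,s)) + d((y,s),(z,r)) for all points (x,t), (y,s), (z,r). -/
noncomputable section

abbrev E (m : ℕ) := EuclideanSpace ℝ (Fin m)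

/-- The distance `d` on ℝ^{n+1} = ℝ^{n-1} × ℝ × ℝ (point = (x', xₙ, t)). -/
noncomputable def sdist {m : ℕ} (p q : E m × ℝ × ℝ) : ℝ :=
  min (‖p.1 - q.1‖ + |p.2.1 - q.2.1| + Real.sqrt |p.2.2 - q.2.2|)
      (‖p.1 - q.1‖ + |p.2.1| + |q.2.1| + |p.2.2 - q.2.2|)

private lemma sqrt_subadd (a b : ℝ) (ha : 0 ≤ a) (hb : 0 ≤ b) :
    Real.sqrt (a + b) ≤ Real.sqrt a + Real.sqrt b := by
  rw [Real.sqrt_le_iff]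
  constructor
  · positivity
  · have h1 : Real.sqrt a ^ 2 = a := Real.sq_sqrt ha
    have h2 : Real.sqrt b ^ 2 = b := Real.sq_sqrt hb
    have h3 : 0 ≤ Real.sqrt a := Real.sqrt_nonneg a
    have h4 : 0 ≤ Real.sqrt b := Real.sqrt_nonneg b
    nlinarith

private lemma self_le_sqrt (a : ℝ) (ha : 0 ≤ a) (ha1 : a ≤ 1) : a ≤ Real.sqrt a := by
  nlinarith [Real.sq_sqrt ha, Real.sqrt_nonneg a, Real.sqrt_le_one.mpr ha1]

private lemma sqrt_add_le_of_one_le (a b : ℝ) (ha : 1 ≤ a) (hb : 0 ≤ b) :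
    Real.sqrt (a + b) ≤ Real.sqrt a + b := by
  rw [Real.sqrt_le_iff]
  have h0 : (0:ℝ) ≤ a := zero_le_one.trans ha
  have h1 : Real.sqrt a ^ 2 = a := Real.sq_sqrt h0
  have h2 : 1 ≤ Real.sqrt a := Real.one_le_sqrt.mpr ha
  constructor
  · nlinarith
  · nlinarith

/-- The distance `d` satisfies the triangle inequality. -/
theorem sdist_triangle (m : ℕ) (p q r : E m × ℝ × ℝ) :
    sdist p r ≤ sdist p q + sdist q r := by
  unfold sdist
  have hn : ‖p.1 - r.1‖ ≤ ‖p.1 - q.1‖ + ‖q.1 - r.1‖ := by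
    have := norm_sub_le_norm_sub_add_norm_sub p.1 q.1 r.1
    linarith
  have ha : |p.2.1 - r.2.1| ≤ |p.2.1 - q.2.1| + |q.2.1 - r.2.1| := abs_sub_le _ _ _
  have ht : |p.2.2 - r.2.2| ≤ |p.2.2 - q.2.2| + |q.2.2 - r.2.2| := abs_sub_le _ _ _
  have hapq : |p.2.1 - q.2.1| ≤ |p.2.1| + |q.2.1| := abs_sub _ _
  have haqr : |q.2.1 - r.2.1| ≤ |q.2.1| + |r.2.1| := abs_sub _ _
  have hap : |p.2.1| ≤ |p.2.1 - q.2.1| + |q.2.1| := by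
    have := abs_sub_abs_le_abs_sub p.2.1 q.2.1
    linarith [abs_nonneg (p.2.1 - q.2.1), neg_abs_le p.2.1, abs_sub_le p.2.1 q.2.1 0]
  have har : |r.2.1| ≤ |q.2.1| + |q.2.1 - r.2.1| := by
    have := abs_sub_le r.2.1 q.2.1 0
    simp only [sub_zero] at this
    have h2 : |r.2.1 - q.2.1| = |q.2.1 - r.2.1| := abs_sub_comm _ _
    linarith
  have htpq : (0:ℝ) ≤ |p.2.2 - q.2.2| := abs_nonneg _
  have htqr : (0:ℝ) ≤ |q.2.2 - r.2.2| := abs_nonneg _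
  have hsq : Real.sqrt |p.2.2 - r.2.2| ≤
      Real.sqrt |p.2.2 - q.2.2| + Real.sqrt |q.2.2 - r.2.2| :=
    (Real.sqrt_le_sqrt ht).trans (sqrt_subadd _ _ htpq htqr)
  have hnn : (0:ℝ) ≤ ‖q.1 - r.1‖ := norm_nonneg _
  have hnn' : (0:ℝ) ≤ ‖p.1 - q.1‖ := norm_nonneg _
  rcases min_cases (‖p.1 - q.1‖ + |p.2.1 - q.2.1| + Real.sqrt |p.2.2 - q.2.2|)
      (‖p.1 - q.1‖ + |p.2.1| + |q.2.1| + |p.2.2 - q.2.2|) with ⟨h1, _⟩ | ⟨h1, _⟩ <;>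
    rcases min_cases (‖q.1 - r.1‖ + |q.2.1 - r.2.1| + Real.sqrt |q.2.2 - r.2.2|)
      (‖q.1 - r.1‖ + |q.2.1| + |r.2.1| + |q.2.2 - r.2.2|) with ⟨h2, _⟩ | ⟨h2, _⟩ <;>
    rw [h1, h2]
  · -- F + F : use F(pr)
    refine (min_le_left _ _).trans ?_
    linarith
  · -- F + S
    rcases le_or_gt |p.2.2 - q.2.2| 1 with hc | hc
    · -- use S(pr)
      refine (min_le_right _ _).trans ?_
      have := self_le_sqrt _ htpq hc
      linarith
    · -- use F(pr)
      refine (min_le_left _ _).trans ?_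
      have h3 : Real.sqrt |p.2.2 - r.2.2| ≤ Real.sqrt |p.2.2 - q.2.2| + |q.2.2 - r.2.2| :=
        (Real.sqrt_le_sqrt ht).trans (sqrt_add_le_of_one_le _ _ hc.le htqr)
      have h4 : |p.2.1 - r.2.1| ≤ |p.2.1 - q.2.1| + |q.2.1| + |r.2.1| := by
        have := abs_sub_le p.2.1 q.2.1 r.2.1
        linarith
      linarith
  · -- S + F
    rcases le_or_gt |q.2.2 - r.2.2| 1 with hc | hc
    · -- use S(pr)
      refine (min_le_right _ _).trans ?_
      have := self_le_sqrt _ htqr hc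
      linarith
    · -- use F(pr)
      refine (min_le_left _ _).trans ?_
      have h3 : Real.sqrt |p.2.2 - r.2.2| ≤ |p.2.2 - q.2.2| + Real.sqrt |q.2.2 - r.2.2| := by
        have h5 : |p.2.2 - r.2.2| ≤ |q.2.2 - r.2.2| + |p.2.2 - q.2.2| := by linarith
        calc Real.sqrt |p.2.2 - r.2.2| ≤ Real.sqrt (|q.2.2 - r.2.2| + |p.2.2 - q.2.2|) :=
              Real.sqrt_le_sqrt h5
          _ ≤ Real.sqrt |q.2.2 - r.2.2| + |p.2.2 - q.2.2| :=
              sqrt_add_le_of_one_le _ _ hc.le htpq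
          _ = _ := by ring
      have h4 : |p.2.1 - r.2.1| ≤ |p.2.1| + |q.2.1| + |q.2.1 - r.2.1| := by linarith
      linarith
  · -- S + S : use S(pr)
    refine (min_le_right _ _).trans ?_
    have hq : (0:ℝ) ≤ |q.2.1| := abs_nonneg _
    linarith
end
end

section
/- Suppose s: [t₀, 0] → ℝ satisfies, on a partition t_k = t₀ + kλ of [t₀, t₀/2] into N = ⌈|t₀|/(2λ)⌉ steps, the recursion: s(t_{k+1}) ≥ s(t_k) + c₀ λ whenever a 'good-time' condition holds and s(t_k) ≤ c₀, and s(t_{k+1}) ≥ s(t_k)(1 - C₀ λ) otherwise, with s(t₀) = 0. If the good-time condition holds for at least half the indices k ∈ {0, …, N-1}, and λ ≤ λ₀(c₀, C₀, |t₀|), then s(t_N) ≥ c₁ for a constant c₁ > 0 depending only on c₀, C₀ and |t₀|. -/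
set_option maxHeartbeats 1000000 in
/-- Discrete iteration lemma: if a nonnegative sequence `s` (with `s 0 = 0`)
gains `c₀λ` at each "good" step where it is below `c₀`, and loses at most a
factor `(1 - C₀λ)` at the other steps, and at least half of the
`N = ⌈T/(2λ)⌉` steps are good, then `s N ≥ c₁ > 0` with `c₁` depending only on
`c₀, C₀, T`, provided `λ ≤ λ₀(c₀, C₀, T)`. -/
theorem discrete_iteration (c₀ C₀ T : ℝ) (hc₀ : 0 < c₀) (hC₀ : 0 < C₀) (hT : 0 < T) :
    ∃ c₁ : ℝ, 0 < c₁ ∧ ∃ lam₀ : ℝ, 0 < lam₀ ∧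
      ∀ lam : ℝ, 0 < lam → lam ≤ lam₀ →
      ∀ N : ℕ, N = ⌈T / (2 * lam)⌉₊ →
      ∀ (s : ℕ → ℝ) (G : Finset ℕ),
        s 0 = 0 → (∀ k, 0 ≤ s k) →
        (∀ k < N,
          (k ∈ G ∧ s k ≤ c₀ → s k + c₀ * lam ≤ s (k + 1)) ∧
          (¬(k ∈ G ∧ s k ≤ c₀) → s k * (1 - C₀ * lam) ≤ s (k + 1))) →
        (N : ℝ) / 2 ≤ ((G ∩ Finset.range N).card : ℝ) →
        c₁ ≤ s N := by
  set δ : ℝ := Real.exp (-(C₀*(T+2))) with hδ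
  have hδpos : 0 < δ := Real.exp_pos _
  refine ⟨c₀ * δ * min (T/4) 1, by positivity, min (1/(2*C₀)) 1, by positivity, ?_⟩
  intro lam hlam hlam0 N hN s G hs0 hpos hrec hg
  have hlam1 : lam ≤ 1 := le_trans hlam0 (min_le_right _ _)
  have hlamC : lam ≤ 1/(2*C₀) := le_trans hlam0 (min_le_left _ _)
  set σ : ℝ := C₀ * lam with hσ
  have hσpos : 0 < σ := by positivity
  have hσhalf : σ ≤ 1/2 := by
    rw [le_div_iff₀ (by positivity : (0:ℝ) < 2*C₀)] at hlamC
    rw [hσ]; nlinarith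
  have h1σ0 : 0 ≤ 1 - σ := by linarith
  have h1σ1 : 1 - σ ≤ 1 := by linarith
  -- bounds on N
  have hNlow : T/2 ≤ lam * N := by
    have h1 : T/(2*lam) ≤ (N:ℝ) := by rw [hN]; exact Nat.le_ceil _
    have h2 : lam * (T/(2*lam)) = T/2 := by field_simp
    nlinarith [mul_le_mul_of_nonneg_left h1 hlam.le]
  have hNhigh : lam * N ≤ T/2 + lam := by
    have h1 : (N:ℝ) < T/(2*lam) + 1 := by
      rw [hN]; exact Nat.ceil_lt_add_one (by positivity)
    have h3 : lam * (T/(2*lam) + 1) = T/2 + lam := by field_simp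
    nlinarith [mul_lt_mul_of_pos_left h1 hlam]
  -- exponential bound
  have hexp : Real.exp (-(2*σ)) ≤ 1 - σ := by
    have h1 : 1 + 2*σ ≤ Real.exp (2*σ) := by
      have := Real.add_one_le_exp (2*σ); linarith
    have h2 : Real.exp (-(2*σ)) * Real.exp (2*σ) = 1 := by
      rw [← Real.exp_add]; simp
    nlinarith [Real.exp_pos (-(2*σ)), Real.exp_pos (2*σ),
      mul_le_mul_of_nonneg_left h1 (Real.exp_pos (-(2*σ))).le]
  have hdecay : ∀ j : ℕ, j ≤ N → δ ≤ (1-σ)^j := by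
    intro j hj
    have h1 : Real.exp (-(2*σ)) ^ j ≤ (1-σ)^j :=
      pow_le_pow_left₀ (Real.exp_pos _).le hexp j
    have h2 : Real.exp (-(2*σ) * j) = Real.exp (-(2*σ)) ^ j := by
      rw [← Real.exp_nat_mul]; ring_nf
    have hj' : (j:ℝ) ≤ (N:ℝ) := Nat.cast_le.mpr hj
    have hlj : lam * j ≤ T/2 + 1 := by
      nlinarith [mul_le_mul_of_nonneg_left hj' hlam.le]
    have h3 : δ ≤ Real.exp (-(2*σ) * j) := by
      rw [hδ]
      apply Real.exp_le_exp.mpr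
      rw [hσ]
      nlinarith [mul_le_mul_of_nonneg_left hlj hC₀.le]
    rw [h2] at h3
    linarith
  -- universal multiplicative bound
  have huniv : ∀ k, k < N → s k * (1 - σ) ≤ s (k+1) := by
    intro k hk
    by_cases h : k ∈ G ∧ s k ≤ c₀
    · have h1 := (hrec k hk).1 h
      have h2 : 0 ≤ s k * σ := mul_nonneg (hpos k) hσpos.le
      have h3 : 0 ≤ c₀ * lam := mul_nonneg hc₀.le hlam.le
      linarith
    · exact (hrec k hk).2 h
  by_cases hA : ∀ k ≤ N, s k ≤ c₀
  · -- never exceeds c₀ : accumulate gains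
    have main : ∀ n, n ≤ N →
        c₀ * lam * ((1-σ)^n * ((G ∩ Finset.range n).card : ℝ)) ≤ s n := by
      intro n
      induction n with
      | zero => intro _; simp [hs0]
      | succ n ih =>
        intro hn1
        have hkN : n < N := hn1
        have ihn := ih hkN.le
        have hpw : 0 ≤ (1-σ)^n := pow_nonneg h1σ0 n
        have hpw1 : (1-σ)^n ≤ 1 := pow_le_one₀ h1σ0 h1σ1
        have hgn : (0:ℝ) ≤ ((G ∩ Finset.range n).card : ℝ) := Nat.cast_nonneg _
        have hps : (1-σ)^(n+1) = (1-σ)^n * (1-σ) := pow_succ _ _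
        by_cases hG : n ∈ G
        · have hstep := (hrec n hkN).1 ⟨hG, hA n hkN.le⟩
          have hcard : ((G ∩ Finset.range (n+1)).card : ℝ)
              = ((G ∩ Finset.range n).card : ℝ) + 1 := by
            rw [Finset.inter_comm, Finset.range_add_one,
              Finset.insert_inter_of_mem hG,
              Finset.card_insert_of_notMem (by simp), Finset.inter_comm]
            push_cast; ring
          rw [hcard, hps]
          nlinarith [mul_nonneg (mul_nonneg hσpos.le hpw) hgn,
            mul_pos hc₀ hlam, mul_nonneg hpw h1σ0,
            mul_le_one₀ hpw1 h1σ0 h1σ1]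
        · have hstep := huniv n hkN
          have hcard : ((G ∩ Finset.range (n+1)).card : ℝ)
              = ((G ∩ Finset.range n).card : ℝ) := by
            rw [Finset.inter_comm, Finset.range_add_one,
              Finset.insert_inter_of_notMem hG, Finset.inter_comm]
          rw [hcard, hps]
          nlinarith [mul_le_mul_of_nonneg_right ihn h1σ0]
    have hmain := main N le_rfl
    have hgN : T/4 ≤ lam * ((G ∩ Finset.range N).card : ℝ) := by
      nlinarith [mul_le_mul_of_nonneg_left hg hlam.le]
    have hdN := hdecay N le_rfl
    have h1 : δ * (T/4) ≤ (1-σ)^N * (lam * ((G ∩ Finset.range N).card : ℝ)) :=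
      mul_le_mul hdN hgN (by positivity) (pow_nonneg h1σ0 N)
    have h2 : c₀ * (δ * (T/4)) ≤ c₀ * ((1-σ)^N * (lam * ((G ∩ Finset.range N).card : ℝ))) :=
      mul_le_mul_of_nonneg_left h1 hc₀.le
    have h3 : c₀ * δ * min (T/4) 1 ≤ c₀ * (δ * (T/4)) := by
      have := min_le_left (T/4) (1:ℝ)
      nlinarith [mul_pos hc₀ hδpos]
    calc c₀ * δ * min (T/4) 1 ≤ c₀ * ((1-σ)^N * (lam * ((G ∩ Finset.range N).card : ℝ))) :=
          le_trans h3 h2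
      _ = c₀ * lam * ((1-σ)^N * ((G ∩ Finset.range N).card : ℝ)) := by ring
      _ ≤ s N := hmain
  · -- exceeds c₀ at some point, then decays
    push_neg at hA
    obtain ⟨m, hmN, hm⟩ := hA
    have chain : ∀ d a, a + d ≤ N → s a * (1-σ)^d ≤ s (a+d) := by
      intro d
      induction d with
      | zero => intro a _; simp
      | succ d ih =>
        intro a h
        have h1 : a + d < N := by omega
        calc s a * (1-σ)^(d+1) = (s a * (1-σ)^d) * (1-σ) := by ring
          _ ≤ s (a+d) * (1-σ) := mul_le_mul_of_nonneg_right (ih a h1.le) h1σ0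
          _ ≤ s (a+d+1) := huniv (a+d) h1
    have hch := chain (N-m) m (by omega)
    have hNm : m + (N - m) = N := by omega
    rw [hNm] at hch
    have hd := hdecay (N-m) (by omega)
    have h1 : c₀ * δ ≤ s m * (1-σ)^(N-m) := mul_le_mul hm.le hd hδpos.le (hpos m)
    have h2 : c₀ * δ * min (T/4) 1 ≤ c₀ * δ := by
      have := min_le_right (T/4) (1:ℝ)
      nlinarith [mul_pos hc₀ hδpos]
    linarith
end
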